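/- Suppose β is continuously differentiable, T-periodic, positive, and satisfies β'(t) ≥ −(μ+α)β(t)(β(t)/(γ+μ) − 1) for all t. Then p_opt(t) := (μ+α)(β(t)/(γ+μ) − 1) + β'(t)/β(t) is nonnegative, and the corresponding periodic disease-free solution satisfies β(t)·S₀[p_opt](t) = γ+μ for all t. -/

import Mathlib

theorem optimal_strategy_formula
    (μ α γ T : ℝ) (hμ : 0 < μ) (hα : 0 < α) (hγ : 0 < γ) (hT : 0 < T)
    (β β' : ℝ → ℝ) (hβ : ∀ t, HasDerivAt β (β' t) t)
    (hβ'c : Continuous β') (hβpos : ∀ t, 0 < β t)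
    (hβper : Function.Periodic β T)
    (hcond : ∀ t, β' t ≥ -(μ + α) * β t * (β t / (γ + μ) - 1))
    (popt : ℝ → ℝ)
    (hpopt : ∀ t, popt t = (μ + α) * (β t / (γ + μ) - 1) + β' t / β t) :
    (∀ t, 0 ≤ popt t) ∧
    ∀ S : ℝ → ℝ,
      (∀ t, HasDerivAt S (μ + α - (popt t + μ + α) * S t) t) →
      Function.Periodic S T →
      ∀ t, β t * S t = γ + μ := by
  have hγμ : (0:ℝ) < γ + μ := by linarith
  have hβne : ∀ t, β t ≠ 0 := fun t => (hβpos t).ne'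
  have hpnn : ∀ t, 0 ≤ popt t := by
    intro t
    have key : popt t * β t = (μ + α) * (β t / (γ + μ) - 1) * β t + β' t := by
      rw [hpopt t]; field_simp [hβne t]
    have h2 : 0 ≤ popt t * β t := by rw [key]; nlinarith [hcond t]
    by_contra hneg
    push_neg at hneg
    nlinarith [hβpos t]
  refine ⟨hpnn, ?_⟩
  have hβc : Continuous β := by
    have : Differentiable ℝ β := fun t => (hβ t).differentiableAt
    exact this.continuous
  have hpc : Continuous (fun t => popt t + μ + α) := by
    have : (fun t => popt t + μ + α)
        = fun t => ((μ + α) * (β t / (γ + μ) - 1) + β' t / β t) + μ + α := by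
      funext t; rw [hpopt t]
    rw [this]
    exact (((continuous_const.mul ((hβc.div_const _).sub continuous_const)).add
      (hβ'c.div hβc hβne)).add continuous_const).add continuous_const
  set P : ℝ → ℝ := fun t => ∫ s in (0:ℝ)..t, (popt s + μ + α) with hP
  have hPd : ∀ t, HasDerivAt P (popt t + μ + α) t := by
    intro t
    exact intervalIntegral.integral_hasDerivAt_right
      (hpc.intervalIntegrable _ _) (hpc.stronglyMeasurableAtFilter _ _)
      hpc.continuousAt
  have hPT : 0 < P T := by
    have : ∀ s ∈ Set.Ioo (0:ℝ) T, 0 < popt s + μ + α := by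
      intro s _; have := hpnn s; linarith
    exact intervalIntegral.intervalIntegral_pos_of_pos_on
      (hpc.intervalIntegrable _ _) this hT
  intro S hS hSper
  set u : ℝ → ℝ := fun t => S t - (γ + μ) / β t with hu
  set w : ℝ → ℝ := fun t => u t * Real.exp (P t) with hw
  have hwd : ∀ t, HasDerivAt w 0 t := by
    intro t
    have h1 : HasDerivAt (fun t => (γ + μ) / β t)
        ((0 * β t - (γ + μ) * β' t) / (β t) ^ 2) t :=
      (hasDerivAt_const t (γ + μ)).div (hβ t) (hβne t)
    have hud : HasDerivAt u
        ((μ + α - (popt t + μ + α) * S t) - (0 * β t - (γ + μ) * β' t) / (β t) ^ 2) t :=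
      (hS t).sub h1
    have hed : HasDerivAt (fun t => Real.exp (P t))
        (Real.exp (P t) * (popt t + μ + α)) t := (hPd t).exp
    have hmul := hud.mul hed
    have hb := hβne t
    have hc := hγμ.ne'
    have key : (μ + α - (popt t + μ + α) * S t - (0 * β t - (γ + μ) * β' t) / (β t) ^ 2)
        + u t * (popt t + μ + α) = 0 := by
      rw [hu, hpopt t]
      field_simp
      ring
    refine hmul.congr_deriv ?_
    have : (μ + α - (popt t + μ + α) * S t - (0 * β t - (γ + μ) * β' t) / β t ^ 2) * Real.exp (P t) +
        u t * (Real.exp (P t) * (popt t + μ + α))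
        = ((μ + α - (popt t + μ + α) * S t - (0 * β t - (γ + μ) * β' t) / (β t) ^ 2)
          + u t * (popt t + μ + α)) * Real.exp (P t) := by ring
    rw [this, key, zero_mul]
  have hwc : ∀ t, w t = w 0 := by
    intro t
    exact is_const_of_deriv_eq_zero (fun x => (hwd x).differentiableAt)
      (fun x => (hwd x).deriv) t 0
  have hST : S T = S 0 := by have := hSper 0; simpa using this
  have hβT : β T = β 0 := by have := hβper 0; simpa using this
  have hP0 : P 0 = 0 := intervalIntegral.integral_same
  have hu0 : u 0 = 0 := by
    have h := hwc T
    rw [hw] at h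
    simp only [hP0, Real.exp_zero, mul_one] at h
    have huT : u T = u 0 := by rw [hu]; simp only [hST, hβT]
    rw [huT] at h
    have hexp : 1 < Real.exp (P T) := by
      have := Real.exp_lt_exp.mpr hPT
      rwa [Real.exp_zero] at this
    nlinarith
  intro t
  have h := hwc t
  rw [hw] at h
  simp only [hP0, Real.exp_zero, mul_one, hu0, zero_mul] at h
  have hut : u t = 0 := by
    have := Real.exp_pos (P t)
    rcases mul_eq_zero.mp h with h' | h'
    · exact h'
    · exact absurd h' this.ne'
  have : S t = (γ + μ) / β t := by
    have := hut
    rw [hu] at this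
    linarith [sub_eq_zero.mp this]
  rw [this, mul_comm]
  exact div_mul_cancel₀ _ (hβne t)
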